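/- Let h be convex, G be closed strongly convex, A linear, and b a vector. Define φ(w) = G*(A*w) − ⟨b,w⟩ + h*(w). Fix w ∈ dom φ and ζ ∈ ∂φ(w). Then the point x̄ = ∇G*(A*w) is the minimizer of z ↦ h(ζ + b − Az) + G(z). -/

import Mathlib

set_option maxHeartbeats 1000000

open scoped RealInnerProductSpace
open Set

lemma aux_convex_lower {n : ℕ} {f : EuclideanSpace ℝ (Fin n) → ℝ}
    (hf : ConvexOn ℝ Set.univ f) : ∃ C : ℝ, 0 ≤ C ∧ ∀ u, -(C * (1 + ‖u‖)) ≤ f u := by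
  have hcont : Continuous f := by
    have := hf.continuousOn isOpen_univ
    exact continuousOn_univ.mp this
  obtain ⟨M, hM⟩ := (isCompact_closedBall (0 : EuclideanSpace ℝ (Fin n)) 1).exists_bound_of_continuousOn hcont.continuousOn
  refine ⟨2 * (|M| + 1), by positivity, fun u => ?_⟩
  have hM' : ∀ x : EuclideanSpace ℝ (Fin n), ‖x‖ ≤ 1 → |f x| ≤ |M| + 1 := by
    intro x hx
    have := hM x (by simpa [Metric.mem_closedBall, dist_zero_right] using hx)
    calc |f x| = ‖f x‖ := rfl
      _ ≤ M := this
      _ ≤ |M| + 1 := by cases abs_cases M <;> linarith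
  rcases le_or_gt ‖u‖ 1 with hu | hu
  · have := hM' u hu
    have h1 : -(|M|+1) ≤ f u := by cases abs_cases (f u) <;> linarith
    nlinarith [norm_nonneg u, abs_nonneg M]
  · have hu0 : (0:ℝ) < ‖u‖ := by linarith
    set a : ℝ := ‖u‖⁻¹ with ha
    have ha0 : 0 < a := by positivity
    have ha1 : a ≤ 1 := by rw [ha, inv_le_one_iff₀]; right; linarith
    have hcomb := hf.2 (mem_univ (0 : EuclideanSpace ℝ (Fin n))) (mem_univ u)
      (sub_nonneg.2 ha1) ha0.le (by ring)
    have hnorm : ‖a • u‖ = 1 := by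
      rw [norm_smul, Real.norm_eq_abs, abs_of_pos ha0, ha, inv_mul_cancel₀ hu0.ne']
    simp only [smul_zero, zero_add, smul_eq_mul] at hcomb
    have h3 : -(|M|+1) ≤ f (a • u) := by
      have := hM' (a • u) hnorm.le
      cases abs_cases (f (a • u)) <;> linarith
    have h4 : |f 0| ≤ |M| + 1 := hM' 0 (by simp)
    have h7 : -(2 * (|M|+1)) ≤ a * f u := by
      nlinarith [le_abs_self (f 0), neg_abs_le (f 0)]
    have haa : ‖u‖ * a = 1 := mul_inv_cancel₀ hu0.ne'
    have h8 : ‖u‖ * (-(2*(|M|+1))) ≤ f u := by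
      calc ‖u‖ * (-(2*(|M|+1))) ≤ ‖u‖ * (a * f u) := by
            apply mul_le_mul_of_nonneg_left h7 hu0.le
        _ = (‖u‖ * a) * f u := by ring
        _ = f u := by rw [haa, one_mul]
    nlinarith [abs_nonneg M, norm_nonneg u]

lemma aux_fenchel {n : ℕ} {G : EuclideanSpace ℝ (Fin n) → ℝ} {m : ℝ} (hm : 0 < m)
    (hG : StrongConvexOn Set.univ m G)
    (Gstar : EuclideanSpace ℝ (Fin n) → ℝ)
    (hGstar : ∀ y, Gstar y = ⨆ u, (⟪y, u⟫ - G u))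
    (y xbar : EuclideanSpace ℝ (Fin n))
    (hx : HasGradientAt Gstar xbar y) :
    (∀ z, ⟪y, z⟫ - G z ≤ Gstar y) ∧ Gstar y = ⟪y, xbar⟫ - G xbar := by
  have hq : ConvexOn ℝ Set.univ fun x => G x - m / 2 * ‖x‖ ^ 2 :=
    strongConvexOn_iff_convex.mp hG
  obtain ⟨C, hC0, hCb⟩ := aux_convex_lower hq
  have hlow : ∀ u, m / 2 * ‖u‖ ^ 2 - C * (1 + ‖u‖) ≤ G u := by
    intro u; have := hCb u; linarith
  have hGcont : Continuous G := by
    have h1 : Continuous fun x : EuclideanSpace ℝ (Fin n) => G x - m / 2 * ‖x‖ ^ 2 :=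
      continuousOn_univ.mp (hq.continuousOn isOpen_univ)
    have : Continuous fun x : EuclideanSpace ℝ (Fin n) =>
        (G x - m / 2 * ‖x‖ ^ 2) + m / 2 * ‖x‖ ^ 2 := by
      exact h1.add (by continuity)
    simpa using this
  -- boundedness of the conjugand
  have hbdd : ∀ y' : EuclideanSpace ℝ (Fin n),
      BddAbove (range fun u => ⟪y', u⟫ - G u) := by
    intro y'
    refine ⟨C + (‖y'‖ + C) ^ 2 / (2 * m), ?_⟩
    rintro _ ⟨u, rfl⟩
    have h1 := real_inner_le_norm y' u
    have h2 := hlow u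
    have hqq : ((‖y'‖ + C) ^ 2 / (2 * m)) * (2 * m) = (‖y'‖ + C) ^ 2 := by
      field_simp
    nlinarith [sq_nonneg (‖y'‖ + C - m * ‖u‖), norm_nonneg u, norm_nonneg y', hm]
  -- coercivity radius
  set F : EuclideanSpace ℝ (Fin n) → ℝ := fun u => ⟪y, u⟫ - G u with hF
  have hFcont : Continuous F := by
    apply Continuous.sub _ hGcont
    exact Continuous.inner continuous_const continuous_id
  set R : ℝ := max (max (2 * ((‖y‖ + C) + 1) / m) (C + 1 + |G 0|)) 1 with hR
  have hR0 : (0:ℝ) ≤ R := le_trans zero_le_one (le_max_right _ _)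
  have hcoerc : ∀ u, R ≤ ‖u‖ → F u ≤ F 0 - 1 := by
    intro u hu
    have hr1 : 2 * ((‖y‖ + C) + 1) / m ≤ ‖u‖ :=
      le_trans (le_trans (le_max_left _ _) (le_max_left _ _)) hu
    have hr1' : 2 * ((‖y‖ + C) + 1) ≤ ‖u‖ * m := (div_le_iff₀ hm).mp hr1
    have hr2 : C + 1 + |G 0| ≤ ‖u‖ :=
      le_trans (le_trans (le_max_right _ _) (le_max_left _ _)) hu
    have h1 := real_inner_le_norm y u
    have h2 := hlow u
    have h3 : G 0 ≤ |G 0| := le_abs_self _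
    have hF0 : F 0 = - G 0 := by simp [hF]
    rw [hF0]
    have key := mul_le_mul_of_nonneg_right hr1' (norm_nonneg u)
    simp only [hF]
    nlinarith [norm_nonneg u]
  -- attainment
  obtain ⟨u0, hu0mem, hu0max⟩ :=
    (isCompact_closedBall (0 : EuclideanSpace ℝ (Fin n)) R).exists_isMaxOn
      ⟨0, by simp [hR0]⟩ hFcont.continuousOn
  have hglob : ∀ u, F u ≤ F u0 := by
    intro u
    rcases le_or_gt ‖u‖ R with huR | huR
    · exact hu0max (by simpa [Metric.mem_closedBall, dist_zero_right] using huR)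
    · have := hcoerc u huR.le
      have h0 : F 0 ≤ F u0 := hu0max (by simp [hR0])
      linarith
  have hatt : Gstar y = F u0 := by
    rw [hGstar y]
    apply le_antisymm
    · exact ciSup_le hglob
    · exact le_ciSup (hbdd y) u0
  have hFYall : ∀ (y' z : EuclideanSpace ℝ (Fin n)), ⟪y', z⟫ - G z ≤ Gstar y' := by
    intro y' z; rw [hGstar y']; exact le_ciSup (hbdd y') z
  -- show u0 = xbar using the gradient
  have hkey : ∀ v, ⟪v, u0⟫ ≤ ⟪xbar, v⟫ := by
    intro v
    set q : ℝ → ℝ := fun σ => Gstar (y + σ • v) with hqdef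
    have hc : HasDerivAt (fun σ : ℝ => y + σ • v) v 0 := by
      have h1 : HasDerivAt (fun σ : ℝ => σ • v) ((1:ℝ) • v) 0 :=
        (hasDerivAt_id (0:ℝ)).smul_const v
      rw [one_smul] at h1
      exact h1.const_add y
    have hfd : HasFDerivAt Gstar (InnerProductSpace.toDual ℝ _ xbar) y := hx.hasFDerivAt
    have hfd' : HasFDerivAt Gstar (InnerProductSpace.toDual ℝ _ xbar)
        ((fun σ : ℝ => y + σ • v) 0) := by simpa using hfd
    have hq' : HasDerivAt q (⟪xbar, v⟫) 0 := by
      have := hfd'.comp_hasDerivAt 0 hc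
      simp only [InnerProductSpace.toDual_apply_apply] at this
      exact this
    have hslope : Filter.Tendsto (slope q 0) (nhdsWithin 0 (Ioi 0)) (nhds ⟪xbar, v⟫) :=
      (hasDerivAt_iff_tendsto_slope.mp hq').mono_left
        (nhdsWithin_mono 0 (fun x hx => ne_of_gt hx))
    refine ge_of_tendsto hslope ?_
    filter_upwards [eventually_mem_nhdsWithin] with σ hσ
    have hσ0 : (0:ℝ) < σ := hσ
    rw [slope_def_field]
    rw [le_div_iff₀ (by simpa using hσ0)]
    have hub : ⟪y + σ • v, u0⟫ - G u0 ≤ q σ := hFYall (y + σ • v) u0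
    have hq0 : q 0 = ⟪y, u0⟫ - G u0 := by
      have : q 0 = Gstar y := by simp [hqdef]
      rw [this, hatt]
    have hexp : ⟪y + σ • v, u0⟫ = ⟪y, u0⟫ + σ * ⟪v, u0⟫ := by
      rw [inner_add_left, real_inner_smul_left]
    rw [hq0] at *
    nlinarith [hub, hexp]
  have hsub : ⟪u0 - xbar, u0 - xbar⟫ ≤ 0 := by
    have h1 := hkey (u0 - xbar)
    have h2 : ⟪u0 - xbar, u0 - xbar⟫ = ⟪u0 - xbar, u0⟫ - ⟪u0 - xbar, xbar⟫ :=
      inner_sub_right _ _ _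
    have h3 : ⟪u0 - xbar, xbar⟫ = ⟪xbar, u0 - xbar⟫ := real_inner_comm _ _
    linarith
  have hu0x : u0 = xbar := sub_eq_zero.mp (real_inner_self_nonpos.mp hsub)
  refine ⟨fun z => hFYall y z, ?_⟩
  rw [hatt, hF, hu0x]

lemma aux_biconj {n : ℕ} {h : EuclideanSpace ℝ (Fin n) → ℝ} (hh : ConvexOn ℝ Set.univ h)
    (η : EuclideanSpace ℝ (Fin n)) (c : ℝ)
    (hyp : ∀ u, ((⟪u, η⟫ + c : ℝ) : EReal) ≤ ⨆ z, (((⟪u, z⟫ - h z : ℝ) : EReal))) :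
    h η ≤ -c := by
  by_contra hlt
  push_neg at hlt
  set S : Set ((EuclideanSpace ℝ (Fin n)) × ℝ) := {p | h p.1 ≤ p.2} with hS
  have hconv : Convex ℝ S := by
    have := hh.convex_epigraph
    simpa [hS] using this
  have hcont : Continuous h := continuousOn_univ.mp (hh.continuousOn isOpen_univ)
  have hclosed : IsClosed S := isClosed_le (hcont.comp continuous_fst) continuous_snd
  have hx0 : ((η, -c) : (EuclideanSpace ℝ (Fin n)) × ℝ) ∉ S := by
    simp only [hS, mem_setOf_eq, not_le]
    exact hlt
  obtain ⟨f, cc, hfx, hfS⟩ := geometric_hahn_banach_point_closed hconv hclosed hx0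
  set β : ℝ := f (0, 1) with hβdef
  have hflin : ∀ (z : EuclideanSpace ℝ (Fin n)) (r : ℝ), f (z, r) = f (z, 0) + r * β := by
    intro z r
    have hzr : ((z, r) : (EuclideanSpace ℝ (Fin n)) × ℝ) = (z, 0) + r • ((0 : EuclideanSpace ℝ (Fin n)), (1:ℝ)) := by
      simp [Prod.ext_iff]
    rw [hzr, map_add, map_smul, smul_eq_mul]
  have hmemS : ∀ (z : EuclideanSpace ℝ (Fin n)) (r : ℝ), h z ≤ r → cc < f (z, 0) + r * β := by
    intro z r hr
    have := hfS (z, r) hr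
    rwa [hflin] at this
  have hβ0 : 0 ≤ β := by
    by_contra hβneg
    push_neg at hβneg
    set r : ℝ := max (h η) ((cc - f (η, 0)) / β) with hr
    have h1 : cc < f (η, 0) + r * β := hmemS η r (le_max_left _ _)
    have h2 : (cc - f (η, 0)) / β ≤ r := le_max_right _ _
    have h3 : r * β ≤ cc - f (η, 0) := by
      rw [div_le_iff_of_neg hβneg] at h2
      linarith [h2]
    linarith
  have hβne : β ≠ 0 := by
    intro hβ0'
    have h1 : cc < f (η, 0) := by
      have := hmemS η (h η) le_rfl
      rwa [hβ0', mul_zero, add_zero] at this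
    have h2 : f (η, -c) = f (η, 0) := by rw [hflin, hβ0', mul_zero, add_zero]
    rw [h2] at hfx
    linarith
  have hβpos : 0 < β := lt_of_le_of_ne hβ0 (Ne.symm hβne)
  -- the vector representing z ↦ f (z, 0)
  set p : EuclideanSpace ℝ (Fin n) :=
    (InnerProductSpace.toDual ℝ (EuclideanSpace ℝ (Fin n))).symm
      (f.comp (ContinuousLinearMap.inl ℝ (EuclideanSpace ℝ (Fin n)) ℝ)) with hp
  have hpz : ∀ z, ⟪p, z⟫ = f (z, 0) := by
    intro z
    rw [hp, InnerProductSpace.toDual_symm_apply]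
    simp
  set u : EuclideanSpace ℝ (Fin n) := (-β⁻¹) • p with hu
  have hub : ∀ z, ⟪u, z⟫ - h z ≤ -(cc / β) := by
    intro z
    have h1 : cc < ⟪p, z⟫ + h z * β := by rw [hpz]; exact hmemS z (h z) le_rfl
    have h2 : ⟪u, z⟫ = -β⁻¹ * ⟪p, z⟫ := real_inner_smul_left _ _ _
    have hββ : β * β⁻¹ = 1 := mul_inv_cancel₀ hβne
    have h5 : (cc - ⟪p, z⟫) / β < h z := by
      rw [div_lt_iff₀ hβpos]; linarith [h1]
    have h6 : -(cc / β) = -β⁻¹ * ⟪p, z⟫ - (cc - ⟪p, z⟫) / β := by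
      field_simp
      ring
    rw [h2, h6]
    linarith [h5]
  have hsup : (⨆ z, (((⟪u, z⟫ - h z : ℝ) : EReal))) ≤ ((-(cc / β) : ℝ) : EReal) :=
    iSup_le fun z => EReal.coe_le_coe_iff.mpr (hub z)
  have hfinal : (⟪u, η⟫ + c : ℝ) ≤ -(cc / β) :=
    EReal.coe_le_coe_iff.mp (le_trans (hyp u) hsup)
  have h2 : ⟪u, η⟫ = -β⁻¹ * ⟪p, η⟫ := real_inner_smul_left _ _ _
  have h3 : ⟪p, η⟫ = f (η, 0) := hpz η
  have h4 : f (η, -c) = f (η, 0) + (-c) * β := hflin η (-c)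
  have hββ : β * β⁻¹ = 1 := mul_inv_cancel₀ hβne
  rw [h2, h3] at hfinal
  have hcc : cc / β * β = cc := div_mul_cancel₀ _ hβne
  have hfx' : f (η, 0) + (-c) * β < cc := by rw [← h4]; exact hfx
  have h5 : cc / β ≤ β⁻¹ * f (η, 0) - c := by linarith [hfinal]
  rw [div_le_iff₀ hβpos] at h5
  have h7 : (β⁻¹ * f (η, 0) - c) * β = f (η, 0) - c * β := by
    field_simp
  linarith [h5, h7, hfx']

open scoped RealInnerProductSpace

/-- Primal recovery from dual stationarity: let `φ(w) = G*(A*w) - ⟪b, w⟫ + h*(w)` be the dual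
objective, where `G` is closed and `t⁻¹`-strongly convex (so `G*` is differentiable) and `h` is
convex. If `w ∈ dom φ` and `ζ ∈ ∂φ(w)`, then `x̄ = ∇G*(A* w)` minimizes
`z ↦ h (ζ + b - A z) + G z`. -/
theorem primal_recovery_from_dual_stationarity {d m : ℕ}
    (h : EuclideanSpace ℝ (Fin m) → ℝ)
    (G : EuclideanSpace ℝ (Fin d) → ℝ)
    (A : EuclideanSpace ℝ (Fin d) →L[ℝ] EuclideanSpace ℝ (Fin m))
    (b : EuclideanSpace ℝ (Fin m)) (t : ℝ) (ht : 0 < t)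
    (hh : ConvexOn ℝ Set.univ h)
    (hG : StrongConvexOn Set.univ t⁻¹ G) (hGc : LowerSemicontinuous G)
    -- the Fenchel conjugate of `G` (real-valued since `G` is strongly convex)
    (Gstar : EuclideanSpace ℝ (Fin d) → ℝ)
    (hGstar : ∀ y, Gstar y = ⨆ u, (⟪y, u⟫ - G u))
    -- the dual objective `φ(w) = G*(A* w) - ⟪b, w⟫ + h*(w)`, with `h*` extended-real-valued
    (φ : EuclideanSpace ℝ (Fin m) → EReal)
    (hφ : ∀ w, φ w = ((Gstar ((ContinuousLinearMap.adjoint A) w) - ⟪b, w⟫ : ℝ) : EReal) +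
        ⨆ z, (((⟪w, z⟫ - h z : ℝ) : EReal)))
    (w ζ : EuclideanSpace ℝ (Fin m))
    (hdom : φ w ≠ ⊤)
    (hζ : ∀ u, φ w + ((⟪ζ, u - w⟫ : ℝ) : EReal) ≤ φ u)
    (xbar : EuclideanSpace ℝ (Fin d))
    (hxbar : HasGradientAt Gstar xbar ((ContinuousLinearMap.adjoint A) w)) :
    ∀ z, h (ζ + b - A xbar) + G xbar ≤ h (ζ + b - A z) + G z := by
  have hm0 : (0:ℝ) < t⁻¹ := inv_pos.mpr ht
  set y : EuclideanSpace ℝ (Fin d) := (ContinuousLinearMap.adjoint A) w with hy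
  obtain ⟨hFY, heq⟩ := aux_fenchel hm0 hG Gstar hGstar y xbar hxbar
  set g : EuclideanSpace ℝ (Fin m) → ℝ :=
    fun u => Gstar ((ContinuousLinearMap.adjoint A) u) - ⟪b, u⟫ with hg
  set Ψ : EuclideanSpace ℝ (Fin m) → EReal :=
    fun u => ⨆ z, (((⟪u, z⟫ - h z : ℝ) : EReal)) with hΨ
  have hφ' : ∀ u, φ u = ((g u : ℝ) : EReal) + Ψ u := fun u => hφ u
  -- Ψ w is a real number s
  have hΨbot : ∀ u, Ψ u ≠ ⊥ := by
    intro u hbot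
    have h1 : (((⟪u, 0⟫ - h 0 : ℝ) : EReal)) ≤ Ψ u := le_iSup (fun z => (((⟪u, z⟫ - h z : ℝ) : EReal))) 0
    rw [hbot, le_bot_iff] at h1
    exact EReal.coe_ne_bot _ h1
  have hΨwtop : Ψ w ≠ ⊤ := by
    intro htop
    apply hdom
    rw [hφ' w, htop, EReal.coe_add_top]
  set s : ℝ := (Ψ w).toReal with hs
  have hsw : ((s : ℝ) : EReal) = Ψ w := EReal.coe_toReal hΨwtop (hΨbot w)
  have hzw : ∀ z, ⟪w, z⟫ - h z ≤ s := by
    intro z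
    have h1 : (((⟪w, z⟫ - h z : ℝ) : EReal)) ≤ Ψ w := le_iSup (fun z => (((⟪w, z⟫ - h z : ℝ) : EReal))) z
    rw [← hsw] at h1
    exact EReal.coe_le_coe_iff.mp h1
  -- subgradient inequality in convenient form
  have hstar : ∀ u, ((g w + s + ⟪ζ, u - w⟫ : ℝ) : EReal) ≤ ((g u : ℝ) : EReal) + Ψ u := by
    intro u
    have h1 := hζ u
    rw [hφ' u, hφ' w, ← hsw] at h1
    calc ((g w + s + ⟪ζ, u - w⟫ : ℝ) : EReal)
        = ((g w : ℝ) : EReal) + ((s : ℝ) : EReal) + ((⟪ζ, u - w⟫ : ℝ) : EReal) := by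
          rw [← EReal.coe_add, ← EReal.coe_add]
      _ ≤ _ := h1
  -- η is a subgradient of Ψ at w
  set η : EuclideanSpace ℝ (Fin m) := ζ + b - A xbar with hη
  have hsubΨ : ∀ u, ((s + ⟪η, u - w⟫ : ℝ) : EReal) ≤ Ψ u := by
    intro u
    by_cases hT : Ψ u = ⊤
    · rw [hT]; exact le_top
    set T : ℝ := (Ψ u).toReal with hTdef
    have hTc : ((T : ℝ) : EReal) = Ψ u := EReal.coe_toReal hT (hΨbot u)
    have hzu : ∀ z, ⟪u, z⟫ - h z ≤ T := by
      intro z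
      have h1 : (((⟪u, z⟫ - h z : ℝ) : EReal)) ≤ Ψ u := le_iSup (fun z => (((⟪u, z⟫ - h z : ℝ) : EReal))) z
      rw [← hTc] at h1
      exact EReal.coe_le_coe_iff.mp h1
    set v : EuclideanSpace ℝ (Fin m) := u - w with hv
    -- derivative of σ ↦ g (w + σ • v) at 0
    have hfun : (fun σ : ℝ => g (w + σ • v)) =
        fun σ : ℝ => Gstar (y + σ • ((ContinuousLinearMap.adjoint A) v)) - (⟪b, w⟫ + σ * ⟪b, v⟫) := by
      funext σ
      rw [hg]
      simp only [map_add, map_smul]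
      rw [inner_add_right, real_inner_smul_right]
    have hc : HasDerivAt (fun σ : ℝ => y + σ • ((ContinuousLinearMap.adjoint A) v))
        ((ContinuousLinearMap.adjoint A) v) 0 := by
      have h1 : HasDerivAt (fun σ : ℝ => σ • ((ContinuousLinearMap.adjoint A) v))
          ((1:ℝ) • ((ContinuousLinearMap.adjoint A) v)) 0 :=
        (hasDerivAt_id (0:ℝ)).smul_const _
      rw [one_smul] at h1
      exact h1.const_add y
    have hfd : HasFDerivAt Gstar (InnerProductSpace.toDual ℝ _ xbar)
        ((fun σ : ℝ => y + σ • ((ContinuousLinearMap.adjoint A) v)) 0) := by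
      simpa using hxbar.hasFDerivAt
    have h1 : HasDerivAt (fun σ : ℝ => Gstar (y + σ • ((ContinuousLinearMap.adjoint A) v)))
        (⟪xbar, (ContinuousLinearMap.adjoint A) v⟫) 0 := by
      have := hfd.comp_hasDerivAt 0 hc
      simp only [InnerProductSpace.toDual_apply_apply] at this
      exact this
    have h2 : HasDerivAt (fun σ : ℝ => ⟪b, w⟫ + σ * ⟪b, v⟫) (⟪b, v⟫) 0 := by
      have h3 : HasDerivAt (fun σ : ℝ => σ * ⟪b, v⟫) ((1:ℝ) * ⟪b, v⟫) 0 :=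
        (hasDerivAt_id (0:ℝ)).mul_const _
      rw [one_mul] at h3
      exact h3.const_add _
    have hder : HasDerivAt (fun σ : ℝ => g (w + σ • v))
        (⟪xbar, (ContinuousLinearMap.adjoint A) v⟫ - ⟪b, v⟫) 0 := by
      rw [hfun]; exact h1.sub h2
    set D : ℝ := ⟪xbar, (ContinuousLinearMap.adjoint A) v⟫ - ⟪b, v⟫ with hD
    -- per-σ slope bound
    have hslopebd : ∀ σ : ℝ, σ ∈ Ioo (0:ℝ) 1 → ⟪ζ, v⟫ + s - T ≤ slope (fun σ : ℝ => g (w + σ • v)) 0 σ := by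
      intro σ hσ
      obtain ⟨hσ0, hσ1⟩ := hσ
      have hΨσ : Ψ (w + σ • v) ≤ (((1 - σ) * s + σ * T : ℝ) : EReal) := by
        apply iSup_le
        intro z
        rw [EReal.coe_le_coe_iff]
        have e1 : ⟪w + σ • v, z⟫ = ⟪w, z⟫ + σ * (⟪u, z⟫ - ⟪w, z⟫) := by
          rw [inner_add_left, real_inner_smul_left, hv, inner_sub_left]
        rw [e1]
        nlinarith [hzw z, hzu z]
      have h3 := le_trans (hstar (w + σ • v)) (add_le_add_right hΨσ _)
      rw [← EReal.coe_add, EReal.coe_le_coe_iff] at h3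
      have e2 : ⟪ζ, (w + σ • v) - w⟫ = σ * ⟪ζ, v⟫ := by
        rw [add_sub_cancel_left, real_inner_smul_right]
      rw [e2] at h3
      have e0 : g (w + (0:ℝ) • v) = g w := by rw [zero_smul, add_zero]
      rw [slope_def_field, e0, sub_zero, le_div_iff₀ hσ0]
      nlinarith [h3]
    -- take the limit σ → 0+
    have hslope : Filter.Tendsto (slope (fun σ : ℝ => g (w + σ • v)) 0)
        (nhdsWithin 0 (Ioi 0)) (nhds D) :=
      (hasDerivAt_iff_tendsto_slope.mp hder).mono_left
        (nhdsWithin_mono 0 (fun x hx => ne_of_gt hx))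
    have hlim : ⟪ζ, v⟫ + s - T ≤ D := by
      refine ge_of_tendsto hslope ?_
      filter_upwards [Ioo_mem_nhdsGT_of_mem (by constructor <;> norm_num : (0:ℝ) ∈ Ico (0:ℝ) 1)]
        with σ hσ
      exact hslopebd σ hσ
    -- conclude
    rw [← hTc, EReal.coe_le_coe_iff]
    have e3 : ⟪η, v⟫ = ⟪ζ, v⟫ + ⟪b, v⟫ - ⟪A xbar, v⟫ := by
      rw [hη, inner_sub_left, inner_add_left]
    have e4 : ⟪xbar, (ContinuousLinearMap.adjoint A) v⟫ = ⟪A xbar, v⟫ :=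
      ContinuousLinearMap.adjoint_inner_right A xbar v
    rw [hD] at hlim
    rw [hv] at e3 ⊢
    linarith [hlim, e3, e4]
  -- biconjugate step: h η ≤ ⟪η, w⟫ - s
  have hbi : h η ≤ ⟪η, w⟫ - s := by
    have := aux_biconj hh η (s - ⟪η, w⟫) ?_
    · linarith [this]
    · intro u
      have h1 := hsubΨ u
      have e1 : (s + ⟪η, u - w⟫ : ℝ) = ⟪u, η⟫ + (s - ⟪η, w⟫) := by
        rw [inner_sub_right, real_inner_comm η u]
        ring
      rw [e1] at h1
      exact h1
  -- final assembly
  intro z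
  have h1 : ⟪w, ζ + b - A z⟫ - h (ζ + b - A z) ≤ s := hzw _
  have h2 : ⟪y, z⟫ - G z ≤ Gstar y := hFY z
  have e1 : ⟪y, z⟫ = ⟪w, A z⟫ := ContinuousLinearMap.adjoint_inner_left A z w
  have e2 : ⟪y, xbar⟫ = ⟪w, A xbar⟫ := ContinuousLinearMap.adjoint_inner_left A xbar w
  have e3 : ⟪w, ζ + b - A z⟫ = ⟪w, ζ⟫ + ⟪w, b⟫ - ⟪w, A z⟫ := by
    rw [inner_sub_right, inner_add_right]
  have e4 : ⟪η, w⟫ = ⟪w, ζ⟫ + ⟪w, b⟫ - ⟪w, A xbar⟫ := by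
    rw [hη, inner_sub_left, inner_add_left, real_inner_comm ζ w, real_inner_comm b w,
      real_inner_comm (A xbar) w]
  have e5 : h (ζ + b - A xbar) = h η := by rw [hη]
  rw [e5]
  rw [heq, e2] at h2
  rw [e1] at h2
  linarith [hbi, h1, h2, e3, e4]
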